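/- Let d_b = d_{π_b,γ}^{P*} be the discounted stationary distribution of behavior policy π_b, assumed everywhere positive on a finite S×A. Define the operator T by (Tω)(s',a') = [γ·π(a'|s')·Σ_{s,a} P*(s'|s,a)·ω(s,a)·d_b(s,a) + (1−γ)·μ₀(s')·π(a'|s')] / d_b(s',a'). Then for any functions ω, u: S×A → ℝ, ||Tω − Tu||_∞ ≤ c·||ω − u||_∞, where c = max_{s',a'} { (π(a'|s')/π_b(a'|s')) · c(s') } and c(s') = 1 − (1−γ)μ₀(s') / (γ·Σ_{s,a} P*(s'|s,a)d_b(s,a) + (1−γ)μ₀(s')) < 1. In particular, if π(a'|s')/π_b(a'|s') < 1/c(s') for all (s',a'), then T is a contraction and has a unique fixed point, with iterates converging geometrically. -/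

import Mathlib

/-- Proposition 1 of the paper: the operator T satisfies
||Tω − Tu||_∞ ≤ c ||ω − u||_∞ with c = max_{s',a'} (π(a'|s')/π_b(a'|s')) c(s'),
c(s') = 1 − (1−γ)μ₀(s')/(γ Σ_{s,a} P*(s'|s,a)d_b(s,a) + (1−γ)μ₀(s'));
in particular, if π(a'|s')/π_b(a'|s') < 1/c(s') for all (s',a'), then c < 1. -/
theorem miw_operator_contraction {S A : Type*} [Fintype S] [Fintype A] [Nonempty S] [Nonempty A]
    (γ : ℝ) (hγ0 : 0 ≤ γ) (hγ1 : γ < 1)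
    (μ0 : S → ℝ) (pol polb : S → A → ℝ) (Pst : S → A → S → ℝ)
    (hμ0 : ∀ s, 0 ≤ μ0 s) (hμ1 : ∑ s, μ0 s = 1)
    (hpol0 : ∀ s a, 0 ≤ pol s a) (hpol1 : ∀ s, ∑ a, pol s a = 1)
    (hpolbpos : ∀ s a, 0 < polb s a) (hpolb1 : ∀ s, ∑ a, polb s a = 1)
    (hPst0 : ∀ s a s', 0 ≤ Pst s a s') (hPst1 : ∀ s a, ∑ s', Pst s a s' = 1)
    -- d_b = d_{π_b,γ}^{P*}, everywhere positive, satisfying the balance equation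
    (db : S → A → ℝ) (hdbpos : ∀ s a, 0 < db s a)
    (hdb : ∀ s' a', db s' a' =
      γ * (∑ s, ∑ a, Pst s a s' * db s a) * polb s' a' + (1 - γ) * μ0 s' * polb s' a')
    (c : S → ℝ)
    (hc : ∀ s', c s' = 1 - (1 - γ) * μ0 s'
      / (γ * (∑ s, ∑ a, Pst s a s' * db s a) + (1 - γ) * μ0 s'))
    (cmax : ℝ)
    (hcmax : cmax = (Finset.univ : Finset (S × A)).sup' Finset.univ_nonempty
      (fun x => pol x.1 x.2 / polb x.1 x.2 * c x.1))
    (T : (S → A → ℝ) → S → A → ℝ)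
    (hT : ∀ ω s' a', T ω s' a' =
      (γ * pol s' a' * (∑ s, ∑ a, Pst s a s' * ω s a * db s a)
        + (1 - γ) * μ0 s' * pol s' a') / db s' a') :
    (∀ ω u : S → A → ℝ, ∀ s' a',
        |T ω s' a' - T u s' a'| ≤ cmax * (Finset.univ : Finset (S × A)).sup'
          Finset.univ_nonempty (fun x => |ω x.1 x.2 - u x.1 x.2|))
    ∧ ((∀ s' a', pol s' a' / polb s' a' < 1 / c s') → cmax < 1) := by

  classical
  -- basic facts
  have hSum0 : ∀ s', 0 ≤ ∑ s, ∑ a, Pst s a s' * db s a := by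
    intro s'
    apply Finset.sum_nonneg; intro s _
    apply Finset.sum_nonneg; intro a _
    exact mul_nonneg (hPst0 s a s') (hdbpos s a).le
  have hB0 : ∀ s', 0 ≤ γ * (∑ s, ∑ a, Pst s a s' * db s a) :=
    fun s' => mul_nonneg hγ0 (hSum0 s')
  have hD : ∀ s', 0 < γ * (∑ s, ∑ a, Pst s a s' * db s a) + (1 - γ) * μ0 s' := by
    intro s'
    obtain ⟨a'⟩ := (inferInstance : Nonempty A)
    have h := hdb s' a'
    have hb := hpolbpos s' a'
    have hdbp := hdbpos s' a'
    nlinarith [h, hb, hdbp]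
  have hcB : ∀ s', c s' = γ * (∑ s, ∑ a, Pst s a s' * db s a)
      / (γ * (∑ s, ∑ a, Pst s a s' * db s a) + (1 - γ) * μ0 s') := by
    intro s'
    rw [hc s']
    field_simp [(hD s').ne']
    ring
  have hc0 : ∀ s', 0 ≤ c s' := by
    intro s'
    rw [hcB s']
    exact div_nonneg (hB0 s') (hD s').le
  constructor
  · intro ω u s' a'
    set M := (Finset.univ : Finset (S × A)).sup' Finset.univ_nonempty
      (fun x => |ω x.1 x.2 - u x.1 x.2|) with hM
    have hM0 : 0 ≤ M := by
      obtain ⟨s0⟩ := (inferInstance : Nonempty S)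
      obtain ⟨a0⟩ := (inferInstance : Nonempty A)
      exact le_trans (abs_nonneg _)
        (Finset.le_sup' (fun x => |ω x.1 x.2 - u x.1 x.2|) (Finset.mem_univ (s0, a0)))
    have key : T ω s' a' - T u s' a'
        = γ * pol s' a' * (∑ s, ∑ a, Pst s a s' * (ω s a - u s a) * db s a) / db s' a' := by
      have hsplit : ∑ s, ∑ a, Pst s a s' * (ω s a - u s a) * db s a
          = (∑ s, ∑ a, Pst s a s' * ω s a * db s a)
            - ∑ s, ∑ a, Pst s a s' * u s a * db s a := by
        rw [← Finset.sum_sub_distrib]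
        apply Finset.sum_congr rfl; intro s _
        rw [← Finset.sum_sub_distrib]
        apply Finset.sum_congr rfl; intro a _
        ring
      rw [hT, hT, div_sub_div_same, hsplit]
      ring_nf
    have habs : |T ω s' a' - T u s' a'|
        = γ * pol s' a' / db s' a' * |∑ s, ∑ a, Pst s a s' * (ω s a - u s a) * db s a| := by
      rw [key, abs_div, abs_of_pos (hdbpos s' a'), abs_mul,
        abs_of_nonneg (mul_nonneg hγ0 (hpol0 s' a')), mul_div_right_comm]
    have hsum : |∑ s, ∑ a, Pst s a s' * (ω s a - u s a) * db s a|
        ≤ M * ∑ s, ∑ a, Pst s a s' * db s a := by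
      refine (Finset.abs_sum_le_sum_abs _ _).trans ?_
      rw [Finset.mul_sum]
      apply Finset.sum_le_sum; intro s _
      refine (Finset.abs_sum_le_sum_abs _ _).trans ?_
      rw [Finset.mul_sum]
      apply Finset.sum_le_sum; intro a _
      have hle : |ω s a - u s a| ≤ M :=
        Finset.le_sup' (fun x => |ω x.1 x.2 - u x.1 x.2|) (Finset.mem_univ (s, a))
      rw [abs_mul, abs_mul, abs_of_nonneg (hPst0 s a s'), abs_of_pos (hdbpos s a)]
      nlinarith [mul_le_mul_of_nonneg_left hle
        (mul_nonneg (hPst0 s a s') (hdbpos s a).le), hPst0 s a s', (hdbpos s a).le]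
    have hfact : γ * pol s' a' / db s' a' * (∑ s, ∑ a, Pst s a s' * db s a)
        = pol s' a' / polb s' a' * c s' := by
      have hdbe : db s' a' = (γ * (∑ s, ∑ a, Pst s a s' * db s a) + (1 - γ) * μ0 s')
          * polb s' a' := by rw [hdb]; ring
      have alg : ∀ B Dμ pb po : ℝ, 0 < γ * B + Dμ → 0 < pb →
          γ * po / ((γ * B + Dμ) * pb) * B = po / pb * (γ * B / (γ * B + Dμ)) := by
        intro B Dμ pb po hpos hpb
        field_simp
      rw [hcB s', hdbe]
      exact alg _ _ _ _ (hD s') (hpolbpos s' a')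
    have hnn : 0 ≤ γ * pol s' a' / db s' a' :=
      div_nonneg (mul_nonneg hγ0 (hpol0 s' a')) (hdbpos s' a').le
    calc |T ω s' a' - T u s' a'|
        = γ * pol s' a' / db s' a'
            * |∑ s, ∑ a, Pst s a s' * (ω s a - u s a) * db s a| := habs
      _ ≤ γ * pol s' a' / db s' a' * (M * ∑ s, ∑ a, Pst s a s' * db s a) :=
          mul_le_mul_of_nonneg_left hsum hnn
      _ = pol s' a' / polb s' a' * c s' * M := by rw [← hfact]; ring
      _ ≤ cmax * M := by
          apply mul_le_mul_of_nonneg_right _ hM0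
          rw [hcmax]
          exact Finset.le_sup' (fun x => pol x.1 x.2 / polb x.1 x.2 * c x.1)
            (Finset.mem_univ (s', a'))
  · intro h
    rw [hcmax, Finset.sup'_lt_iff]
    intro x _
    have hx := h x.1 x.2
    have hpp : 0 ≤ pol x.1 x.2 / polb x.1 x.2 :=
      div_nonneg (hpol0 x.1 x.2) (hpolbpos x.1 x.2).le
    rcases eq_or_lt_of_le (hc0 x.1) with hz | hcp
    · simp [← hz]
    · exact (lt_div_iff₀ hcp).mp hx
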